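/- Let X be a set, F : X → X a map, γ : X → ℝ, s_n(x) = ∑_{k=0}^{n} γ(F^k x), and σ_N(x) = (1/(N+1)) ∑_{n=0}^{N} s_n(x) the Cesàro means of the resolving series. Let C_γ be the set of x ∈ X for which σ(x) = lim_{N→∞} σ_N(x) exists. Then C_γ is completely invariant (x ∈ C_γ if and only if F x ∈ C_γ), and the function −σ satisfies the cohomological equation on C_γ: for all x ∈ C_γ, −σ(F x) − (−σ(x)) = γ(x). -/

import Mathlib

open Filter

/-- Let `s_n(x) = ∑_{k=0}^{n} γ(F^k x)` and let
`σ_N(x) = (1/(N+1)) ∑_{n=0}^{N} s_n(x)` be the Cesàro means of the resolving series.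
The set `C_γ` of points where the Cesàro limit `σ(x)` exists is completely invariant,
and `−σ` satisfies the cohomological equation on `C_γ`. -/
theorem cesaro_sum_solves_cohomological_equation
    {X : Type*} (F : X → X) (γ : X → ℝ)
    (s : ℕ → X → ℝ)
    (hs : ∀ n x, s n x = ∑ k ∈ Finset.range (n + 1), γ (F^[k] x))
    (σN : ℕ → X → ℝ)
    (hσN : ∀ N x, σN N x = (∑ n ∈ Finset.range (N + 1), s n x) / (N + 1))
    (Cγ : Set X)
    (hCγ : ∀ x, x ∈ Cγ ↔ ∃ L : ℝ, Tendsto (fun N => σN N x) atTop (nhds L))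
    (σ : X → ℝ)
    (hσ : ∀ x ∈ Cγ, Tendsto (fun N => σN N x) atTop (nhds (σ x))) :
    (∀ x : X, x ∈ Cγ ↔ F x ∈ Cγ) ∧
    (∀ x ∈ Cγ, (-σ (F x)) - (-σ x) = γ x) := by
  -- shift identity for s
  have hshift : ∀ n x, s n (F x) = s (n + 1) x - γ x := by
    intro n x
    rw [hs, hs]
    rw [Finset.sum_range_succ' (fun k => γ (F^[k] x)) (n + 1)]
    simp [Function.iterate_succ_apply]
  -- key identity for σN
  have key : ∀ (x : X) (N : ℕ),
      σN N (F x) = (((N : ℝ) + 2) / ((N : ℝ) + 1)) * (σN (N + 1) x - γ x) := by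
    intro x N
    have h1 : ∑ n ∈ Finset.range (N + 1), s n (F x)
        = (∑ n ∈ Finset.range (N + 2), s n x) - ((N : ℝ) + 2) * γ x := by
      have h2 : ∑ n ∈ Finset.range (N + 1), s n (F x)
          = ∑ n ∈ Finset.range (N + 1), (s (n + 1) x - γ x) := by
        exact Finset.sum_congr rfl fun n _ => hshift n x
      rw [h2, Finset.sum_sub_distrib]
      rw [Finset.sum_range_succ' (fun n => s n x) (N + 1)]
      have h0 : s 0 x = γ x := by simp [hs]
      simp [h0]
      ring
    rw [hσN, hσN, h1]
    have hN1 : ((N : ℝ) + 1) ≠ 0 := by positivity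
    have hN2 : ((N : ℝ) + 2) ≠ 0 := by positivity
    field_simp
    push_cast
    ring
  -- the ratio tends to 1
  have hr : Tendsto (fun N : ℕ => ((N : ℝ) + 2) / ((N : ℝ) + 1)) atTop (nhds 1) := by
    have h1 : (fun N : ℕ => ((N : ℝ) + 2) / ((N : ℝ) + 1))
        = fun N : ℕ => 1 + 1 / ((N : ℝ) + 1) := by
      funext N
      have : ((N : ℝ) + 1) ≠ 0 := by positivity
      field_simp
      ring
    rw [h1]
    have := tendsto_one_div_add_atTop_nhds_zero_nat (𝕜 := ℝ)
    simpa using (tendsto_const_nhds (x := (1 : ℝ)) (f := atTop)).add this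
  -- forward direction of invariance
  have fwd : ∀ (x : X) (L : ℝ), Tendsto (fun N => σN N x) atTop (nhds L) →
      Tendsto (fun N => σN N (F x)) atTop (nhds (L - γ x)) := by
    intro x L hL
    have hL' : Tendsto (fun N => σN (N + 1) x) atTop (nhds L) :=
      hL.comp (tendsto_add_atTop_nat 1)
    have := hr.mul (hL'.sub (tendsto_const_nhds (x := γ x)))
    simpa [key x] using this
  have bwd : ∀ (x : X) (M : ℝ), Tendsto (fun N => σN N (F x)) atTop (nhds M) →
      Tendsto (fun N => σN N x) atTop (nhds (M + γ x)) := by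
    intro x M hM
    have hrinv : Tendsto (fun N : ℕ => ((N : ℝ) + 1) / ((N : ℝ) + 2)) atTop (nhds 1) := by
      have := hr.inv₀ (by norm_num)
      simpa [one_div, inv_div] using this
    have hs1 : Tendsto (fun N => σN (N + 1) x) atTop (nhds (M + γ x)) := by
      have heq : ∀ N : ℕ, σN (N + 1) x
          = (((N : ℝ) + 1) / ((N : ℝ) + 2)) * σN N (F x) + γ x := by
        intro N
        have hN1 : ((N : ℝ) + 1) ≠ 0 := by positivity
        have hN2 : ((N : ℝ) + 2) ≠ 0 := by positivity
        rw [key x N]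
        field_simp
        ring
      have := (hrinv.mul hM).add (tendsto_const_nhds (x := γ x))
      simp only [one_mul] at this
      simpa [← heq] using this
    exact (tendsto_add_atTop_iff_nat 1).mp hs1
  constructor
  · intro x
    constructor
    · intro hx
      obtain ⟨L, hL⟩ := (hCγ x).mp hx
      exact (hCγ (F x)).mpr ⟨L - γ x, fwd x L hL⟩
    · intro hx
      obtain ⟨M, hM⟩ := (hCγ (F x)).mp hx
      exact (hCγ x).mpr ⟨M + γ x, bwd x M hM⟩
  · intro x hx
    have hx' : F x ∈ Cγ := by
      obtain ⟨L, hL⟩ := (hCγ x).mp hx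
      exact (hCγ (F x)).mpr ⟨L - γ x, fwd x L hL⟩
    have h1 : Tendsto (fun N => σN N (F x)) atTop (nhds (σ x - γ x)) :=
      fwd x (σ x) (hσ x hx)
    have h2 := hσ (F x) hx'
    have := tendsto_nhds_unique h1 h2
    linarith
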